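/- Let F be a finite set of size M partitioned into disjoint strata F_1, …, F_H with |F_h| = M_h ≥ 2 for each h. Let S_1, …, S_H be independent random subsets, where S_h is uniformly distributed over the size-m_h subsets of F_h (0 ≤ m_h ≤ M_h), let π_1, …, π_H ∈ (0,1) be constants, and let (a_i)_{i∈F} be real numbers. Define D = (1/M) Σ_{h=1}^H Σ_{i∈F_h} ( 1_{i∈S_h}/π_h − 1 ) a_i. Then E[D²] ≤ (1/M) · [ Σ_{h=1}^H m_h/(π_h² (M_h − 1)) + Σ_{h=1}^H (m_h − π_h M_h)²/(π_h² M_h) ] · (1/M) Σ_{i∈F} a_i². -/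

import Mathlib

open Finset

lemma count_mem_powersetCard {ι : Type*} [DecidableEq ι] (G : Finset ι) (m : ℕ) {i : ι}
    (hi : i ∈ G) :
    ((G.powersetCard (m+1)).filter (fun s => i ∈ s)).card = (G.erase i).card.choose m := by
  rw [← card_powersetCard]
  apply Finset.card_nbij' (fun s => s.erase i) (fun t => insert i t)
  · intro s hs
    simp only [mem_coe, mem_filter, mem_powersetCard] at hs
    obtain ⟨⟨hsub, hcard⟩, hmem⟩ := hs
    rw [mem_coe, mem_powersetCard]
    exact ⟨erase_subset_erase i hsub, by rw [card_erase_of_mem hmem, hcard]; rfl⟩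
  · intro t ht
    rw [mem_coe, mem_powersetCard] at ht
    obtain ⟨hsub, hcard⟩ := ht
    have hit : i ∉ t := fun h => (mem_erase.1 (hsub h)).1 rfl
    simp only [mem_coe, mem_filter, mem_powersetCard]
    refine ⟨⟨insert_subset hi (hsub.trans (erase_subset i G)), ?_⟩, mem_insert_self i t⟩
    rw [card_insert_of_notMem hit, hcard]
  · intro s hs
    simp only [mem_coe, mem_filter] at hs
    exact insert_erase hs.2
  · intro t ht
    rw [mem_coe, mem_powersetCard] at ht
    have hit : i ∉ t := fun h => (mem_erase.1 (ht.1 h)).1 rfl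
    exact erase_insert hit

lemma count_pair_powersetCard {ι : Type*} [DecidableEq ι] (G : Finset ι) (m : ℕ) {i j : ι}
    (hi : i ∈ G) (hj : j ∈ G) (hij : i ≠ j) :
    ((G.powersetCard (m+2)).filter (fun s => i ∈ s ∧ j ∈ s)).card
      = ((G.erase i).erase j).card.choose m := by
  rw [← card_powersetCard]
  apply Finset.card_nbij' (fun s => (s.erase i).erase j) (fun t => insert i (insert j t))
  · intro s hs
    simp only [mem_coe, mem_filter, mem_powersetCard] at hs
    obtain ⟨⟨hsub, hcard⟩, hmi, hmj⟩ := hs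
    rw [mem_coe, mem_powersetCard]
    refine ⟨erase_subset_erase j (erase_subset_erase i hsub), ?_⟩
    rw [card_erase_of_mem (mem_erase.2 ⟨hij.symm, hmj⟩), card_erase_of_mem hmi, hcard]
    rfl
  · intro t ht
    rw [mem_coe, mem_powersetCard] at ht
    obtain ⟨hsub, hcard⟩ := ht
    have hjt : j ∉ t := fun h => (mem_erase.1 (hsub h)).1 rfl
    have hit : i ∉ t := fun h => (mem_erase.1 (mem_of_mem_erase (hsub h))).1 rfl
    have hijt : i ∉ insert j t := by simp [hij, hit]
    simp only [mem_coe, mem_filter, mem_powersetCard]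
    have htG : t ⊆ G := hsub.trans ((erase_subset j _).trans (erase_subset i G))
    refine ⟨⟨insert_subset hi (insert_subset hj htG), ?_⟩, mem_insert_self i _,
      mem_insert_of_mem (mem_insert_self j t)⟩
    rw [card_insert_of_notMem hijt, card_insert_of_notMem hjt, hcard]
  · intro s hs
    simp only [mem_coe, mem_filter] at hs
    obtain ⟨_, hmi, hmj⟩ := hs
    dsimp only
    rw [insert_erase (mem_erase.2 ⟨hij.symm, hmj⟩), insert_erase hmi]
  · intro t ht
    rw [mem_coe, mem_powersetCard] at ht
    have hjt : j ∉ t := fun h => (mem_erase.1 (ht.1 h)).1 rfl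
    have hit : i ∉ t := fun h => (mem_erase.1 (mem_of_mem_erase (ht.1 h))).1 rfl
    have hijt : i ∉ insert j t := by simp [hij, hit]
    dsimp only
    rw [erase_insert hijt, erase_insert hjt]

lemma key1 {ι : Type*} [DecidableEq ι] (G : Finset ι) (m : ℕ) {i : ι}
    (hm : m ≤ G.card) (hi : i ∈ G) :
    ((G.powersetCard m).filter (fun s => i ∈ s)).card * G.card
      = m * G.card.choose m := by
  cases m with
  | zero =>
      have h0 : (G.powersetCard 0).filter (fun s => i ∈ s) = ∅ := by
        apply filter_false_of_mem
        intro s hs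
        rw [mem_powersetCard] at hs
        have : s = ∅ := card_eq_zero.1 hs.2
        simp [this]
      rw [h0]
      simp
  | succ m' =>
      rw [count_mem_powersetCard G m' hi, card_erase_of_mem hi]
      have hpos : 1 ≤ G.card := le_trans (Nat.succ_le_succ (Nat.zero_le m')) hm
      have h1 := Nat.add_one_mul_choose_eq (G.card - 1) m'
      have e : G.card - 1 + 1 = G.card := by omega
      rw [e] at h1
      rw [mul_comm, h1]
      ring

lemma key2 {ι : Type*} [DecidableEq ι] (G : Finset ι) (m : ℕ) {i j : ι}
    (hm : m ≤ G.card) (hi : i ∈ G) (hj : j ∈ G) (hij : i ≠ j) :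
    ((G.powersetCard m).filter (fun s => i ∈ s ∧ j ∈ s)).card * (G.card * (G.card - 1))
      = m * (m - 1) * G.card.choose m := by
  have hsmall : ∀ m'', m'' < 2 → m'' ≤ G.card →
      (G.powersetCard m'').filter (fun s => i ∈ s ∧ j ∈ s) = ∅ := by
    intro m'' hlt _
    apply filter_false_of_mem
    intro s hs hmem
    rw [mem_powersetCard] at hs
    have h2 : 1 < s.card := one_lt_card.2 ⟨i, hmem.1, j, hmem.2, hij⟩
    omega
  match m, hm with
  | 0, hm => rw [hsmall 0 (by omega) hm]; simp
  | 1, hm => rw [hsmall 1 (by omega) hm]; simp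
  | (m+2), hm =>
      rw [count_pair_powersetCard G m hi hj hij,
        card_erase_of_mem (mem_erase.2 ⟨hij.symm, hj⟩),
        card_erase_of_mem hi]
      have hM : 2 ≤ G.card := le_trans (by omega) hm
      have e0 : G.card - 1 - 1 = G.card - 2 := by omega
      rw [e0]
      have h1 := Nat.add_one_mul_choose_eq (G.card - 2) m
      have e1 : G.card - 2 + 1 = G.card - 1 := by omega
      rw [e1] at h1
      have h2 := Nat.add_one_mul_choose_eq (G.card - 1) (m + 1)
      have e2 : G.card - 1 + 1 = G.card := by omega
      rw [e2] at h2
      have e3 : m + 2 - 1 = m + 1 := rfl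
      rw [e3]
      calc (G.card - 2).choose m * (G.card * (G.card - 1))
          = ((G.card - 1) * (G.card - 2).choose m) * G.card := by ring
        _ = ((G.card - 1).choose (m + 1) * (m + 1)) * G.card := by rw [h1]
        _ = (G.card * (G.card - 1).choose (m + 1)) * (m + 1) := by ring
        _ = (G.card.choose (m + 2) * (m + 2)) * (m + 1) := by rw [h2]
        _ = (m + 2) * (m + 1) * G.card.choose (m + 2) := by ring

lemma sum_ind_real {ι : Type*} [DecidableEq ι] (G : Finset ι) (m : ℕ) {i : ι}
    (hm : m ≤ G.card) (hi : i ∈ G) :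
    (∑ s ∈ G.powersetCard m, (if i ∈ s then (1:ℝ) else 0)) * (G.card : ℝ)
      = (m : ℝ) * (G.card.choose m : ℝ) := by
  rw [Finset.sum_boole]
  exact_mod_cast key1 G m hm hi

lemma sum_ind_pair_real {ι : Type*} [DecidableEq ι] (G : Finset ι) (m : ℕ) {i j : ι}
    (hm : m ≤ G.card) (hM2 : 2 ≤ G.card) (hi : i ∈ G) (hj : j ∈ G) (hij : i ≠ j) :
    (∑ s ∈ G.powersetCard m,
        (if i ∈ s then (1:ℝ) else 0) * (if j ∈ s then (1:ℝ) else 0))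
      * ((G.card : ℝ) * ((G.card : ℝ) - 1))
      = (m : ℝ) * ((m : ℝ) - 1) * (G.card.choose m : ℝ) := by
  have hconv : ∀ s : Finset ι,
      (if i ∈ s then (1:ℝ) else 0) * (if j ∈ s then (1:ℝ) else 0)
        = if i ∈ s ∧ j ∈ s then (1:ℝ) else 0 := by
    intro s
    by_cases h1 : i ∈ s <;> by_cases h2 : j ∈ s <;> simp [h1, h2]
  rw [Finset.sum_congr rfl (fun s _ => hconv s), Finset.sum_boole]
  have h := key2 G m hm hi hj hij
  rcases Nat.eq_zero_or_pos m with rfl | hm1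
  · have hMpos : 0 < G.card * (G.card - 1) :=
      Nat.mul_pos (by omega) (by omega)
    have h0 : ((G.powersetCard 0).filter (fun s => i ∈ s ∧ j ∈ s)).card
        * (G.card * (G.card - 1)) = 0 := by simpa using h
    rcases Nat.mul_eq_zero.1 h0 with h1 | h1
    · rw [h1]; simp
    · omega
  · have hr := congrArg (Nat.cast : ℕ → ℝ) h
    push_cast [Nat.cast_sub hm1, Nat.cast_sub (show 1 ≤ G.card by omega)] at hr
    linarith [hr]

lemma core_ineq (M m p T S C : ℝ) (hM : 2 ≤ M) (hm0 : 0 ≤ m) (hmM : m ≤ M) (hp : 0 < p)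
    (hS : 0 ≤ S) (hC : 0 ≤ C) :
    (C * ((m*(M-1)*S + m*(m-1)*(T^2 - S)) / (M*(M-1)))) * (1/p^2)
      - (C * ((m*T) / M)) * (2*T/p) + C*T^2
    ≤ C * (m/(p^2*(M-1)) * S + ((m - p*M)/(p*M) * T)^2) := by
  rw [← sub_nonneg]
  have hM0 : M ≠ 0 := by linarith
  have hM1 : M - 1 ≠ 0 := by linarith
  have hp0 : p ≠ 0 := ne_of_gt hp
  have key : C * (m/(p^2*(M-1)) * S + ((m - p*M)/(p*M) * T)^2)
      - ((C * ((m*(M-1)*S + m*(m-1)*(T^2 - S)) / (M*(M-1)))) * (1/p^2)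
        - (C * ((m*T) / M)) * (2*T/p) + C*T^2)
      = C * (m^2*M*S + m*(M-m)*T^2) / (p^2*M^2*(M-1)) := by
    field_simp
    ring
  rw [key]
  apply div_nonneg
  · apply mul_nonneg hC
    have h1 : 0 ≤ m*(M-m)*T^2 :=
      mul_nonneg (mul_nonneg hm0 (by linarith)) (sq_nonneg T)
    have h2 : 0 ≤ m^2*M*S := by positivity
    linarith
  · have : 0 < p^2*M^2*(M-1) := by
      apply mul_pos (by positivity)
      linarith
    linarith

section Stratum
variable {ι : Type*} [DecidableEq ι] (G : Finset ι) (m : ℕ) (p : ℝ) (a : ι → ℝ)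

lemma stratum_sum_eq (hm : m ≤ G.card) (hM2 : 2 ≤ G.card) (hp : 0 < p) :
    ∑ s ∈ G.powersetCard m, (∑ i ∈ G, ((if i ∈ s then (1:ℝ) else 0) / p - 1) * a i)
      = (G.card.choose m : ℝ)
          * (((m:ℝ) - p * (G.card:ℝ)) / (p * (G.card:ℝ)) * ∑ i ∈ G, a i) := by
  have hM0 : ((G.card:ℝ)) ≠ 0 := by
    have : (2:ℝ) ≤ (G.card:ℝ) := by exact_mod_cast hM2
    linarith
  have hp0 : p ≠ 0 := ne_of_gt hp
  rw [Finset.sum_comm]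
  have hterm : ∀ i ∈ G,
      (∑ s ∈ G.powersetCard m, ((if i ∈ s then (1:ℝ) else 0) / p - 1) * a i)
        = ((G.card.choose m : ℝ) * (((m:ℝ) - p * (G.card:ℝ)) / (p * (G.card:ℝ)))) * a i := by
    intro i hi
    rw [← Finset.sum_mul]
    congr 1
    have hind : (∑ s ∈ G.powersetCard m, (if i ∈ s then (1:ℝ) else 0))
        = (m:ℝ) * (G.card.choose m : ℝ) / (G.card:ℝ) :=
      (eq_div_iff hM0).2 (sum_ind_real G m hm hi)
    rw [Finset.sum_sub_distrib, ← Finset.sum_div, hind, Finset.sum_const,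
      Finset.card_powersetCard, nsmul_eq_mul, mul_one]
    field_simp
  rw [Finset.sum_congr rfl hterm, ← Finset.mul_sum, mul_assoc]

lemma stratum_sq_le (hm : m ≤ G.card) (hM2 : 2 ≤ G.card) (hp : 0 < p) :
    ∑ s ∈ G.powersetCard m,
        (∑ i ∈ G, ((if i ∈ s then (1:ℝ) else 0) / p - 1) * a i) ^ 2
      ≤ (G.card.choose m : ℝ) *
          ((m:ℝ) / (p^2 * ((G.card:ℝ) - 1)) * ∑ i ∈ G, (a i)^2
            + (((m:ℝ) - p * (G.card:ℝ)) / (p * (G.card:ℝ)) * ∑ i ∈ G, a i) ^ 2) := by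
  have hM2' : (2:ℝ) ≤ (G.card:ℝ) := by exact_mod_cast hM2
  have hM0 : ((G.card:ℝ)) ≠ 0 := by linarith
  have hM1 : ((G.card:ℝ)) - 1 ≠ 0 := by linarith
  have hp0 : p ≠ 0 := ne_of_gt hp
  set T := ∑ i ∈ G, a i with hT
  set S := ∑ i ∈ G, (a i)^2 with hS
  set C := (G.card.choose m : ℝ) with hCdef
  set M := ((G.card : ℕ) : ℝ) with hMdef
  -- indicator averages
  have hind : ∀ i ∈ G, (∑ s ∈ G.powersetCard m, (if i ∈ s then (1:ℝ) else 0))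
      = (m:ℝ) * C / M :=
    fun i hi => (eq_div_iff hM0).2 (sum_ind_real G m hm hi)
  have hpair : ∀ i ∈ G, ∀ j ∈ G, i ≠ j →
      (∑ s ∈ G.powersetCard m,
        (if i ∈ s then (1:ℝ) else 0) * (if j ∈ s then (1:ℝ) else 0))
      = (m:ℝ) * ((m:ℝ) - 1) * C / (M * (M - 1)) :=
    fun i hi j hj hij => (eq_div_iff (mul_ne_zero hM0 hM1)).2
      (sum_ind_pair_real G m hm hM2 hi hj hij)
  -- rewrite each X s in terms of Y s
  have hXY : ∀ s : Finset ι,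
      (∑ i ∈ G, ((if i ∈ s then (1:ℝ) else 0) / p - 1) * a i)
        = (∑ i ∈ G, (if i ∈ s then (1:ℝ) else 0) * a i) / p - T := by
    intro s
    rw [Finset.sum_div, ← Finset.sum_sub_distrib]
    exact Finset.sum_congr rfl (fun i _ => by ring)
  -- first moment of Y
  have hSY : (∑ s ∈ G.powersetCard m, ∑ i ∈ G, (if i ∈ s then (1:ℝ) else 0) * a i)
      = C * (((m:ℝ) * T) / M) := by
    rw [Finset.sum_comm]
    have : ∀ i ∈ G, (∑ s ∈ G.powersetCard m, (if i ∈ s then (1:ℝ) else 0) * a i)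
        = ((m:ℝ) * C / M) * a i := by
      intro i hi
      rw [← Finset.sum_mul, hind i hi]
    rw [Finset.sum_congr rfl this, ← Finset.mul_sum, ← hT]
    field_simp
  -- second moment of Y
  have hSY2 : (∑ s ∈ G.powersetCard m,
        (∑ i ∈ G, (if i ∈ s then (1:ℝ) else 0) * a i) ^ 2)
      = C * (((m:ℝ)*(M-1)*S + (m:ℝ)*((m:ℝ)-1)*(T^2 - S)) / (M*(M-1))) := by
    have hsq : ∀ s : Finset ι,
        (∑ i ∈ G, (if i ∈ s then (1:ℝ) else 0) * a i) ^ 2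
          = ∑ i ∈ G, ∑ j ∈ G,
              ((if i ∈ s then (1:ℝ) else 0) * (if j ∈ s then (1:ℝ) else 0)) * (a i * a j) := by
      intro s
      rw [sq, Finset.sum_mul_sum]
      exact Finset.sum_congr rfl (fun i _ => Finset.sum_congr rfl (fun j _ => by ring))
    rw [Finset.sum_congr rfl (fun s _ => hsq s), Finset.sum_comm]
    have hinner : ∀ i ∈ G,
        (∑ s ∈ G.powersetCard m, ∑ j ∈ G,
            ((if i ∈ s then (1:ℝ) else 0) * (if j ∈ s then (1:ℝ) else 0)) * (a i * a j))
          = ((m:ℝ)*((m:ℝ)-1)*C/(M*(M-1))) * (a i * (T - a i))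
            + ((m:ℝ)*C/M) * (a i * a i) := by
      intro i hi
      rw [Finset.sum_comm]
      have hsplit : ∀ j ∈ G,
          (∑ s ∈ G.powersetCard m,
            ((if i ∈ s then (1:ℝ) else 0) * (if j ∈ s then (1:ℝ) else 0)) * (a i * a j))
          = (∑ s ∈ G.powersetCard m,
              (if i ∈ s then (1:ℝ) else 0) * (if j ∈ s then (1:ℝ) else 0)) * (a i * a j) :=
        fun j _ => by rw [← Finset.sum_mul]
      rw [Finset.sum_congr rfl hsplit]
      rw [← Finset.sum_erase_add _ _ hi]
      have hdiagval : (∑ s ∈ G.powersetCard m,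
          (if i ∈ s then (1:ℝ) else 0) * (if i ∈ s then (1:ℝ) else 0)) = (m:ℝ) * C / M := by
        have : ∀ s : Finset ι, (if i ∈ s then (1:ℝ) else 0) * (if i ∈ s then (1:ℝ) else 0)
            = (if i ∈ s then (1:ℝ) else 0) := fun s => by by_cases h : i ∈ s <;> simp [h]
        rw [Finset.sum_congr rfl (fun s _ => this s)]
        exact hind i hi
      have hoffval : ∀ j ∈ G.erase i,
          (∑ s ∈ G.powersetCard m,
            (if i ∈ s then (1:ℝ) else 0) * (if j ∈ s then (1:ℝ) else 0)) * (a i * a j)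
          = ((m:ℝ)*((m:ℝ)-1)*C/(M*(M-1))) * (a i * a j) := by
        intro j hjmem
        obtain ⟨hji, hjG⟩ := Finset.mem_erase.1 hjmem
        rw [hpair i hi j hjG (Ne.symm hji)]
      rw [Finset.sum_congr rfl hoffval, hdiagval, ← Finset.mul_sum, ← Finset.mul_sum,
        Finset.sum_erase_eq_sub hi, ← hT]
    rw [Finset.sum_congr rfl hinner, Finset.sum_add_distrib, ← Finset.mul_sum, ← Finset.mul_sum]
    have e1 : (∑ i ∈ G, a i * (T - a i)) = T^2 - S := by
      rw [Finset.sum_congr rfl (fun i (_ : i ∈ G) => (by ring :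
        a i * (T - a i) = a i * T - (a i)^2)), Finset.sum_sub_distrib, ← Finset.sum_mul, ← hT, ← hS]
      ring
    have e2 : (∑ i ∈ G, a i * a i) = S := by
      rw [hS]
      exact Finset.sum_congr rfl (fun i _ => (sq (a i)).symm ▸ by ring)
    rw [e1, e2]
    field_simp
    ring
  -- expand the square of X
  have hexp : (∑ s ∈ G.powersetCard m,
      (∑ i ∈ G, ((if i ∈ s then (1:ℝ) else 0) / p - 1) * a i) ^ 2)
      = (∑ s ∈ G.powersetCard m,
          (∑ i ∈ G, (if i ∈ s then (1:ℝ) else 0) * a i) ^ 2) * (1/p^2)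
        - (∑ s ∈ G.powersetCard m,
            (∑ i ∈ G, (if i ∈ s then (1:ℝ) else 0) * a i)) * (2*T/p)
        + C * T^2 := by
    rw [Finset.sum_congr rfl (fun s _ => by rw [hXY s])]
    have : ∀ s ∈ G.powersetCard m,
        ((∑ i ∈ G, (if i ∈ s then (1:ℝ) else 0) * a i) / p - T)^2
        = (∑ i ∈ G, (if i ∈ s then (1:ℝ) else 0) * a i)^2 * (1/p^2)
          - (∑ i ∈ G, (if i ∈ s then (1:ℝ) else 0) * a i) * (2*T/p) + T^2 := by
      intro s _
      field_simp
      ring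
    rw [Finset.sum_congr rfl this, Finset.sum_add_distrib, Finset.sum_sub_distrib,
      ← Finset.sum_mul, ← Finset.sum_mul, Finset.sum_const, Finset.card_powersetCard,
      nsmul_eq_mul, ← hCdef]
  rw [hexp, hSY, hSY2]
  exact core_ineq M (m:ℝ) p T S C hM2' (by positivity)
    (by rw [hMdef]; exact_mod_cast hm) hp
    (by positivity) (by positivity)

end Stratum

lemma prod_eq_one_off_pair {H : ℕ} {f : Fin H → ℝ} {h h' : Fin H} (hne : h ≠ h')
    (h1 : ∀ k, k ≠ h → k ≠ h' → f k = 1) : ∏ k, f k = f h * f h' := by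
  rw [← Finset.prod_pair hne]
  refine (Finset.prod_subset (Finset.subset_univ _) ?_).symm
  intro k _ hk
  simp only [Finset.mem_insert, Finset.mem_singleton, not_or] at hk
  exact h1 k hk.1 hk.2

lemma pair_expect {β : Type*} [DecidableEq β] {H : ℕ} (t : Fin H → Finset β)
    (ht : ∀ k, (t k).Nonempty) (X : Fin H → β → ℝ) (h h' : Fin H) :
    ((Fintype.piFinset t).card : ℝ)⁻¹
        * ∑ σ ∈ Fintype.piFinset t, X h (σ h) * X h' (σ h')
    = if h = h'
      then ((t h).card : ℝ)⁻¹ * ∑ x ∈ t h, X h x * X h x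
      else (((t h).card : ℝ)⁻¹ * ∑ x ∈ t h, X h x)
           * (((t h').card : ℝ)⁻¹ * ∑ x ∈ t h', X h' x) := by
  have hcard : ∀ k, ((t k).card : ℝ) ≠ 0 :=
    fun k => Nat.cast_ne_zero.2 (Finset.card_ne_zero_of_mem (ht k).choose_spec)
  have hcpi : ((Fintype.piFinset t).card : ℝ) = ∏ k, ((t k).card : ℝ) := by
    rw [Fintype.card_piFinset]; push_cast; rfl
  by_cases hhe : h = h'
  · subst hhe
    rw [if_pos rfl]
    set g : Fin H → β → ℝ := fun k x => if k = h then X h x * X h x else 1 with hg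
    have h2 : ∀ σ : Fin H → β, X h (σ h) * X h (σ h) = ∏ k, g k (σ k) := by
      intro σ
      rw [Finset.prod_eq_single h (fun k _ hk => by simp [hg, if_neg hk]) (by simp)]
      simp [hg]
    rw [Finset.sum_congr rfl (fun σ _ => h2 σ), ← Finset.prod_univ_sum, hcpi,
      ← Finset.prod_inv_distrib, ← Finset.prod_mul_distrib]
    rw [Finset.prod_eq_single h
      (fun k _ hk => by
        simp only [hg, if_neg hk, Finset.sum_const, nsmul_eq_mul, mul_one]
        exact inv_mul_cancel₀ (hcard k))
      (by simp)]
    simp [hg]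
  · rw [if_neg hhe]
    set g : Fin H → β → ℝ := fun k x => if k = h then X h x else if k = h' then X h' x else 1
      with hg
    have h2 : ∀ σ : Fin H → β, X h (σ h) * X h' (σ h') = ∏ k, g k (σ k) := by
      intro σ
      rw [prod_eq_one_off_pair hhe (fun k hk hk' => by simp [hg, if_neg hk, if_neg hk'])]
      simp [hg, if_neg (Ne.symm hhe), hhe]
    rw [Finset.sum_congr rfl (fun σ _ => h2 σ), ← Finset.prod_univ_sum, hcpi,
      ← Finset.prod_inv_distrib, ← Finset.prod_mul_distrib]
    rw [prod_eq_one_off_pair hhe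
      (fun k hk hk' => by
        simp only [hg, if_neg hk, if_neg hk', Finset.sum_const, nsmul_eq_mul, mul_one]
        exact inv_mul_cancel₀ (hcard k))]
    simp [hg, if_neg (Ne.symm hhe), hhe]

/-- Fold-wise fluctuation bound for stratified simple random sampling without
replacement: independent SRSWOR samples are drawn within each stratum, and the
second moment of the normalized HT fluctuation is bounded as in Proposition 2. -/
theorem stratified_srswor_fluctuation_bound {ι : Type*} [DecidableEq ι]
    (H : ℕ) (F : Finset ι) (strata : Fin H → Finset ι)
    (hdisj : ∀ h h' : Fin H, h ≠ h' → Disjoint (strata h) (strata h'))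
    (hcover : Finset.univ.biUnion strata = F)
    (hM : ∀ h, 2 ≤ (strata h).card)
    (msz : Fin H → ℕ) (hm : ∀ h, msz h ≤ (strata h).card)
    (π : Fin H → ℝ) (hπ : ∀ h, 0 < π h ∧ π h < 1)
    (a : ι → ℝ) :
    ((Fintype.piFinset (fun h => (strata h).powersetCard (msz h))).card : ℝ)⁻¹
        * ∑ s ∈ Fintype.piFinset (fun h => (strata h).powersetCard (msz h)),
            ((F.card : ℝ)⁻¹
              * ∑ h, ∑ i ∈ strata h,
                  ((if i ∈ s h then (1 : ℝ) else 0) / π h - 1) * a i) ^ 2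
      ≤ (F.card : ℝ)⁻¹
          * ((∑ h, (msz h : ℝ) / ((π h) ^ 2 * (((strata h).card : ℝ) - 1)))
              + ∑ h, ((msz h : ℝ) - π h * ((strata h).card : ℝ)) ^ 2
                  / ((π h) ^ 2 * ((strata h).card : ℝ)))
          * ((F.card : ℝ)⁻¹ * ∑ i ∈ F, (a i) ^ 2) := by
  classical
  set Ω : Fin H → Finset (Finset ι) := fun h => (strata h).powersetCard (msz h) with hΩ
  set Xf : Fin H → Finset ι → ℝ :=
    fun h s => ∑ i ∈ strata h, ((if i ∈ s then (1:ℝ) else 0) / π h - 1) * a i with hXf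
  have hXs : ∀ (s : Fin H → Finset ι) (h : Fin H),
      (∑ i ∈ strata h, ((if i ∈ s h then (1:ℝ) else 0) / π h - 1) * a i) = Xf h (s h) :=
    fun s h => rfl
  have hne : ∀ h, (Ω h).Nonempty :=
    fun h => (Finset.powersetCard_nonempty).2 (hm h)
  have hNne : ∀ h, ((Ω h).card : ℝ) ≠ 0 :=
    fun h => Nat.cast_ne_zero.2 (Finset.card_ne_zero_of_mem (hne h).choose_spec)
  set c : ℝ := ((F.card : ℕ) : ℝ)⁻¹ with hc
  set A : Fin H → ℝ := fun h => ((Ω h).card : ℝ)⁻¹ * ∑ x ∈ Ω h, Xf h x with hA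
  set Q : Fin H → ℝ := fun h => ((Ω h).card : ℝ)⁻¹ * ∑ x ∈ Ω h, Xf h x * Xf h x with hQ
  set Af : Fin H → ℝ := fun h =>
    ((msz h:ℝ) - π h * ((strata h).card:ℝ)) / (π h * ((strata h).card:ℝ))
      * ∑ i ∈ strata h, a i with hAf
  -- basic positivity
  have hπ0 : ∀ h, π h ≠ 0 := fun h => ne_of_gt (hπ h).1
  have hcard2 : ∀ h, (2:ℝ) ≤ ((strata h).card : ℝ) := fun h => by exact_mod_cast hM h
  -- rewrite goal with Xf
  simp only [hXs]
  -- Step 1: pull out c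
  have step1 : ((Fintype.piFinset Ω).card : ℝ)⁻¹
      * ∑ s ∈ Fintype.piFinset Ω, (c * ∑ h, Xf h (s h)) ^ 2
      = c^2 * (((Fintype.piFinset Ω).card : ℝ)⁻¹
          * ∑ s ∈ Fintype.piFinset Ω, (∑ h, Xf h (s h)) ^ 2) := by
    rw [Finset.sum_congr rfl (fun s _ => mul_pow c _ 2), ← Finset.mul_sum]
    ring
  -- Step 2: decomposition of the second moment
  have E2 : ((Fintype.piFinset Ω).card : ℝ)⁻¹
      * ∑ s ∈ Fintype.piFinset Ω, (∑ h, Xf h (s h)) ^ 2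
      = (∑ h, (Q h - A h ^ 2)) + (∑ h, A h) ^ 2 := by
    have hsq : ∀ s : Fin H → Finset ι,
        (∑ h, Xf h (s h)) ^ 2 = ∑ h, ∑ h', Xf h (s h) * Xf h' (s h') := by
      intro s
      rw [sq, Finset.sum_mul_sum]
    calc ((Fintype.piFinset Ω).card : ℝ)⁻¹
        * ∑ s ∈ Fintype.piFinset Ω, (∑ h, Xf h (s h)) ^ 2
        = ∑ h, ∑ h', ((Fintype.piFinset Ω).card : ℝ)⁻¹
            * ∑ s ∈ Fintype.piFinset Ω, Xf h (s h) * Xf h' (s h') := by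
          rw [Finset.sum_congr rfl (fun s _ => hsq s), Finset.sum_comm, Finset.mul_sum]
          refine Finset.sum_congr rfl fun h _ => ?_
          rw [Finset.sum_comm, Finset.mul_sum]
      _ = ∑ h, ∑ h', (if h = h' then Q h else A h * A h') := by
          refine Finset.sum_congr rfl fun h _ => Finset.sum_congr rfl fun h' _ => ?_
          rw [pair_expect Ω hne Xf h h']
      _ = ∑ h, ∑ h', (A h * A h' + (if h = h' then Q h - A h * A h else 0)) := by
          refine Finset.sum_congr rfl fun h _ => Finset.sum_congr rfl fun h' _ => ?_
          by_cases hh : h = h'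
          · subst hh; simp
          · simp [hh]
      _ = (∑ h, (Q h - A h ^ 2)) + (∑ h, A h) ^ 2 := by
          rw [Finset.sum_congr rfl
            (fun h (_ : h ∈ univ) => Finset.sum_add_distrib), Finset.sum_add_distrib]
          rw [Finset.sum_congr rfl
            (fun h (_ : h ∈ univ) => Finset.sum_ite_eq univ h (fun _ => Q h - A h * A h))]
          simp only [Finset.mem_univ, if_pos]
          rw [sq, Finset.sum_mul_sum]
          rw [Finset.sum_congr rfl (fun h (_ : h ∈ univ) => (Finset.mul_sum _ _ _).symm)]
          ring_nf
          rw [add_comm]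
          congr 1
          · exact Finset.sum_congr rfl fun h _ => by ring
  -- formulas and bounds per stratum
  have hAeq : ∀ h, A h = Af h := by
    intro h
    have hcardΩ : ((Ω h).card : ℝ) = ((strata h).card.choose (msz h) : ℝ) := by
      rw [hΩ]; rw [Finset.card_powersetCard]
    rw [hA, hAf]
    simp only
    rw [stratum_sum_eq (strata h) (msz h) (π h) a (hm h) (hM h) (hπ h).1, hcardΩ,
      ← mul_assoc, inv_mul_cancel₀ (by rw [← hcardΩ]; exact hNne h), one_mul]
  have hQle : ∀ h, Q h ≤ (msz h : ℝ) / ((π h)^2 * (((strata h).card:ℝ) - 1))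
      * (∑ i ∈ strata h, (a i)^2) + Af h ^ 2 := by
    intro h
    have hcardΩ : ((Ω h).card : ℝ) = ((strata h).card.choose (msz h) : ℝ) := by
      rw [hΩ]; rw [Finset.card_powersetCard]
    have hb := stratum_sq_le (strata h) (msz h) (π h) a (hm h) (hM h) (hπ h).1
    rw [hQ]
    simp only
    rw [Finset.sum_congr rfl (fun x (_ : x ∈ Ω h) => (sq (Xf h x)).symm)]
    have hpos : (0:ℝ) < ((Ω h).card : ℝ) :=
      lt_of_le_of_ne (Nat.cast_nonneg _) (Ne.symm (hNne h))
    rw [inv_mul_le_iff₀ hpos, hcardΩ]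
    calc (∑ x ∈ Ω h, Xf h x ^ 2) ≤ _ := hb
      _ = _ := by rw [mul_comm]
  -- cover facts
  have hsub : ∀ h, strata h ⊆ F := by
    intro h
    rw [← hcover]
    exact Finset.subset_biUnion_of_mem strata (Finset.mem_univ h)
  have hSF : (∑ h, ∑ i ∈ strata h, (a i)^2) = ∑ i ∈ F, (a i)^2 := by
    rw [← hcover]
    exact (Finset.sum_biUnion (fun x _ y _ hxy => hdisj x y hxy)).symm
  have hSh_le : ∀ h, (∑ i ∈ strata h, (a i)^2) ≤ ∑ i ∈ F, (a i)^2 :=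
    fun h => Finset.sum_le_sum_of_subset_of_nonneg (hsub h) (fun i _ _ => sq_nonneg (a i))
  have hSF0 : (0:ℝ) ≤ ∑ i ∈ F, (a i)^2 := Finset.sum_nonneg fun i _ => sq_nonneg (a i)
  -- variance part
  have hVar_sum : ∑ h, (Q h - A h^2)
      ≤ (∑ h, (msz h:ℝ)/((π h)^2*(((strata h).card:ℝ)-1))) * ∑ i ∈ F, (a i)^2 := by
    rw [Finset.sum_mul]
    apply Finset.sum_le_sum
    intro h _
    have hcoef : (0:ℝ) ≤ (msz h:ℝ)/((π h)^2*(((strata h).card:ℝ)-1)) := by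
      apply div_nonneg (Nat.cast_nonneg _)
      apply mul_nonneg (sq_nonneg _)
      linarith [hcard2 h]
    calc Q h - A h^2
        ≤ (msz h:ℝ)/((π h)^2*(((strata h).card:ℝ)-1)) * ∑ i ∈ strata h, (a i)^2 := by
          rw [hAeq h]
          linarith [hQle h]
      _ ≤ (msz h:ℝ)/((π h)^2*(((strata h).card:ℝ)-1)) * ∑ i ∈ F, (a i)^2 :=
          mul_le_mul_of_nonneg_left (hSh_le h) hcoef
  -- Cauchy-Schwarz part
  have hBle : (∑ h, A h)^2
      ≤ (∑ h, ((msz h:ℝ) - π h * ((strata h).card:ℝ))^2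
            / ((π h)^2 * ((strata h).card:ℝ))) * ∑ i ∈ F, (a i)^2 := by
    have hMpos : ∀ h, (0:ℝ) < ((strata h).card:ℝ) :=
      fun h => lt_of_lt_of_le two_pos (hcard2 h)
    set u : Fin H → ℝ := fun h =>
      ((msz h:ℝ) - π h * ((strata h).card:ℝ)) / (π h * ((strata h).card:ℝ))
        * Real.sqrt ((strata h).card:ℝ) with hu
    set w : Fin H → ℝ := fun h =>
      (∑ i ∈ strata h, a i) / Real.sqrt ((strata h).card:ℝ) with hw
    have hsqrt : ∀ h, Real.sqrt ((strata h).card:ℝ) ≠ 0 :=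
      fun h => ne_of_gt (Real.sqrt_pos.2 (hMpos h))
    have huw : ∀ h, A h = u h * w h := by
      intro h
      rw [hAeq h, hAf, hu, hw]
      simp only
      rw [show ((msz h:ℝ) - π h * ((strata h).card:ℝ)) / (π h * ((strata h).card:ℝ))
            * Real.sqrt ((strata h).card:ℝ)
            * ((∑ i ∈ strata h, a i) / Real.sqrt ((strata h).card:ℝ))
          = ((msz h:ℝ) - π h * ((strata h).card:ℝ)) / (π h * ((strata h).card:ℝ))
            * (∑ i ∈ strata h, a i)
            * (Real.sqrt ((strata h).card:ℝ) / Real.sqrt ((strata h).card:ℝ)) by ring,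
        div_self (hsqrt h), mul_one]
    have hcs := Finset.sum_mul_sq_le_sq_mul_sq Finset.univ u w
    have hu2 : ∀ h, u h^2 = ((msz h:ℝ) - π h * ((strata h).card:ℝ))^2
        /((π h)^2 * ((strata h).card:ℝ)) := by
      intro h
      rw [hu]
      simp only
      rw [mul_pow, Real.sq_sqrt (le_of_lt (hMpos h)), div_pow, mul_pow]
      have hπ2 : (π h)^2 ≠ 0 := pow_ne_zero 2 (hπ0 h)
      have hM2' : ((strata h).card:ℝ) ≠ 0 := ne_of_gt (hMpos h)
      field_simp
    have hw2le : ∑ h, w h^2 ≤ ∑ i ∈ F, (a i)^2 := by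
      rw [← hSF]
      apply Finset.sum_le_sum
      intro h _
      rw [hw]
      simp only [div_pow, Real.sq_sqrt (le_of_lt (hMpos h))]
      rw [div_le_iff₀ (hMpos h)]
      calc (∑ i ∈ strata h, a i)^2
          ≤ ((strata h).card:ℝ) * ∑ i ∈ strata h, (a i)^2 := by
            exact sq_sum_le_card_mul_sum_sq
        _ = (∑ i ∈ strata h, (a i)^2) * ((strata h).card:ℝ) := mul_comm _ _
    have hu20 : (0:ℝ) ≤ ∑ h, u h ^ 2 := Finset.sum_nonneg fun h _ => sq_nonneg _
    calc (∑ h, A h)^2 = (∑ h, u h * w h)^2 := by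
          rw [Finset.sum_congr rfl fun h _ => huw h]
      _ ≤ (∑ h, u h^2) * (∑ h, w h^2) := hcs
      _ ≤ (∑ h, u h^2) * ∑ i ∈ F, (a i)^2 := mul_le_mul_of_nonneg_left hw2le hu20
      _ = (∑ h, ((msz h:ℝ) - π h * ((strata h).card:ℝ))^2
            / ((π h)^2 * ((strata h).card:ℝ))) * ∑ i ∈ F, (a i)^2 := by
          rw [Finset.sum_congr rfl fun h _ => hu2 h]
  -- final assembly
  rw [step1, E2]
  calc c^2 * ((∑ h, (Q h - A h ^ 2)) + (∑ h, A h) ^ 2)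
      ≤ c^2 * (((∑ h, (msz h:ℝ)/((π h)^2*(((strata h).card:ℝ)-1)))
          + ∑ h, ((msz h:ℝ) - π h * ((strata h).card:ℝ))^2
              / ((π h)^2 * ((strata h).card:ℝ))) * ∑ i ∈ F, (a i)^2) := by
        apply mul_le_mul_of_nonneg_left _ (sq_nonneg c)
        calc (∑ h, (Q h - A h ^ 2)) + (∑ h, A h) ^ 2
            ≤ (∑ h, (msz h:ℝ)/((π h)^2*(((strata h).card:ℝ)-1))) * (∑ i ∈ F, (a i)^2)
              + (∑ h, ((msz h:ℝ) - π h * ((strata h).card:ℝ))^2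
                  / ((π h)^2 * ((strata h).card:ℝ))) * ∑ i ∈ F, (a i)^2 :=
              add_le_add hVar_sum hBle
          _ = _ := by ring
    _ = c * ((∑ h, (msz h:ℝ)/((π h)^2*(((strata h).card:ℝ)-1)))
          + ∑ h, ((msz h:ℝ) - π h * ((strata h).card:ℝ))^2
              / ((π h)^2 * ((strata h).card:ℝ)))
          * (c * ∑ i ∈ F, (a i)^2) := by ring
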